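/- arXiv:2012.00231 — 2 statements merged into one kernel-verified Lean document; each statement's English description precedes it below -/
import Mathlib

section
/- Let X be a topological space and A ⊆ X a closed set such that the zeroth singular homology group H_0(U, U \ A) is trivial for every open set U ⊆ X. Then A is nowhere dense in X (i.e., the interior of A is empty). -/
open CategoryTheory CategoryTheory.Limits AlgebraicTopology

/-- The singular chain complex functor, obtained from the singular simplicial set by applying
the free abelian group functor levelwise and taking the alternating face map complex. -/
noncomputable def singularChainFunctor : TopCat.{0} ⥤ ChainComplex AddCommGrpCat.{0} ℕ :=
  TopCat.toSSet ⋙ ((SimplicialObject.whiskering _ _).obj AddCommGrpCat.free) ⋙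
    alternatingFaceMapComplex AddCommGrpCat

/-- The relative singular homology `H_k(X, S)` of a space `X` and a subset `S ⊆ X`,
defined as the homology of the cokernel of the induced map of singular chain complexes. -/
noncomputable def relSingularHomology (X : Type) [TopologicalSpace X] (S : Set X) (k : ℕ) :
    AddCommGrpCat :=
  (HomologicalComplex.homologyFunctor AddCommGrpCat (ComplexShape.down ℕ) k).obj
    (cokernel (singularChainFunctor.map
      (TopCat.ofHom ⟨Subtype.val, continuous_subtype_val⟩ : TopCat.of S ⟶ TopCat.of X)))

/-- The singular homology `H_k(U, V)` of a pair of subsets `V ⊆ U` of an ambient space `X`,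
where `U` carries the subspace topology. -/
noncomputable def pairHomology (X : Type) [TopologicalSpace X] (U V : Set X) (k : ℕ) :
    AddCommGrpCat :=
  relSingularHomology U {x : U | (x : X) ∈ V} k

/-- The homomorphism `H_k(U', V') → H_k(U, V)` induced by the inclusion of pairs. -/
noncomputable def pairInclHom (X : Type) [TopologicalSpace X] {U V U' V' : Set X}
    (hU : U' ⊆ U) (hV : V' ⊆ V) (k : ℕ) :
    pairHomology X U' V' k ⟶ pairHomology X U V k :=
  (HomologicalComplex.homologyFunctor AddCommGrpCat (ComplexShape.down ℕ) k).map
    (cokernel.map _ _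
      (singularChainFunctor.map
        (TopCat.ofHom ⟨fun x => ⟨Set.inclusion hU x.1, hV x.2⟩,
          (((continuous_inclusion hU).comp continuous_subtype_val).subtype_mk _)⟩ :
          TopCat.of {x : U' | (x : X) ∈ V'} ⟶ TopCat.of {x : U | (x : X) ∈ V}))
      (singularChainFunctor.map
        (TopCat.ofHom ⟨Set.inclusion hU, continuous_inclusion hU⟩ : TopCat.of U' ⟶ TopCat.of U))
      (by rw [← Functor.map_comp, ← Functor.map_comp]; congr 1))

/-- A closed set `A ⊆ X` is a homological `Z_n`-set (`n ∈ ℕ∞`) if the singular homology groups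
`H_k(U, U \ A)` are trivial for all open `U ⊆ X` and all `k ≤ n`. -/
def IsHomologicalZSet (X : Type) [TopologicalSpace X] (n : ℕ∞) (A : Set X) : Prop :=
  IsClosed A ∧ ∀ U : Set X, IsOpen U → ∀ k : ℕ, (k : ℕ∞) ≤ n →
    Subsingleton (pairHomology X U (U \ A) k)


lemma singular_isEmpty (Y : TopCat.{0}) [IsEmpty Y] (n : SimplexCategoryᵒᵖ) :
    IsEmpty ((TopCat.toSSet.obj Y).obj n) := by
  constructor
  intro f
  have hpt : Nonempty (SimplexCategory.toTop.obj n.unop) := by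
    infer_instance
  obtain ⟨pt⟩ := hpt
  exact IsEmpty.false ((show SimplexCategory.toTop.obj n.unop ⟶ Y from f.down) pt)

lemma freeAbelian_subsingleton (α : Type) [IsEmpty α] :
    Subsingleton (FreeAbelianGroup α) := by
  constructor
  intro a b
  have h : ∀ x : FreeAbelianGroup α, x = 0 := fun x =>
    FreeAbelianGroup.induction_on x rfl (fun y => (IsEmpty.false y).elim)
      (fun y hy => by rw [hy, neg_zero]) (fun y z hy hz => by rw [hy, hz, add_zero])
  rw [h a, h b]

lemma isZero_singularChain (Y : TopCat.{0}) [IsEmpty Y] (n : ℕ) :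
    Limits.IsZero ((singularChainFunctor.obj Y).X n) := by
  have h1 : IsEmpty ((TopCat.toSSet.obj Y).obj (Opposite.op (SimplexCategory.mk n))) :=
    singular_isEmpty Y _
  have : Subsingleton ((singularChainFunctor.obj Y).X n) :=
    freeAbelian_subsingleton _
  exact AddCommGrpCat.isZero_of_subsingleton _

noncomputable def augHom (Y : TopCat.{0}) :
    (singularChainFunctor.obj Y).X 0 ⟶ AddCommGrpCat.of ℤ :=
  AddCommGrpCat.ofHom (FreeAbelianGroup.lift (fun _ => (1 : ℤ)))

lemma augHom_d (Y : TopCat.{0}) :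
    (singularChainFunctor.obj Y).d 1 0 ≫ augHom Y = 0 := by
  have hd : (singularChainFunctor.obj Y).d 1 0 =
      AlternatingFaceMapComplex.objD
        ((((SimplicialObject.whiskering _ _).obj AddCommGrpCat.free)).obj (TopCat.toSSet.obj Y)) 0 :=
    AlgebraicTopology.alternatingFaceMapComplex_obj_d _ _
  refine AddCommGrpCat.hom_ext (FreeAbelianGroup.lift_ext _ _ fun σ => ?_)
  show augHom Y ((singularChainFunctor.obj Y).d 1 0 (FreeAbelianGroup.of σ)) = 0
  rw [hd]
  simp only [AlternatingFaceMapComplex.objD]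
  erw [Fin.sum_univ_two]
  simp only [Fin.val_zero, pow_zero, one_smul, Fin.val_one, pow_one, neg_smul, one_smul]
  erw [AddCommGrpCat.hom_add_apply]
  erw [AddMonoidHom.neg_apply]
  erw [map_add, map_neg]
  have key : ∀ (f : (TopCat.toSSet.obj Y).obj (Opposite.op (SimplexCategory.mk 1)) ⟶
      (TopCat.toSSet.obj Y).obj (Opposite.op (SimplexCategory.mk 0))),
      augHom Y (AddCommGrpCat.free.map f (FreeAbelianGroup.of σ)) = (1 : ℤ) := fun f => by
    show (FreeAbelianGroup.lift fun _ => (1:ℤ)) (FreeAbelianGroup.map f (FreeAbelianGroup.of σ)) = (1 : ℤ)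
    rw [FreeAbelianGroup.map_of_apply, FreeAbelianGroup.lift_apply_of]
  have k0 : augHom Y ((((SimplicialObject.whiskering _ _).obj AddCommGrpCat.free).obj (TopCat.toSSet.obj Y)).δ 0 (FreeAbelianGroup.of σ)) = 1 := key _
  have k1 : augHom Y (AddCommGrpCat.Hom.hom ((((SimplicialObject.whiskering _ _).obj AddCommGrpCat.free).obj (TopCat.toSSet.obj Y)).δ 1) (FreeAbelianGroup.of σ)) = 1 := key _
  exact (congrArg₂ (fun a b : ℤ => a + -b) k0 k1).trans (by simp)

noncomputable def augChainMap (Y : TopCat.{0}) :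
    singularChainFunctor.obj Y ⟶ (ChainComplex.single₀ AddCommGrpCat).obj (AddCommGrpCat.of ℤ) :=
  (ChainComplex.toSingle₀Equiv _ _).symm ⟨augHom Y, augHom_d Y⟩

lemma augChainMap_f_zero (Y : TopCat.{0}) : (augChainMap Y).f 0 = augHom Y :=
  ChainComplex.toSingle₀Equiv_symm_apply_f_zero _ _

lemma augHom_surj (Y : TopCat.{0}) (y : Y) : Function.Surjective (augHom Y) := by
  intro n
  let m : ℤ := n
  refine ⟨m • FreeAbelianGroup.of
    (show (TopCat.toSSet.obj Y).obj (Opposite.op (SimplexCategory.mk 0)) from ULift.up (show SimplexCategory.toTop.obj (SimplexCategory.mk 0) ⟶ Y from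
      TopCat.ofHom ⟨fun _ => y, continuous_const⟩)), ?_⟩
  show (FreeAbelianGroup.lift fun _ => (1:ℤ)) (m • FreeAbelianGroup.of _) = m
  rw [map_zsmul, FreeAbelianGroup.lift_apply_of, smul_eq_mul, mul_one]

/-- If `H_0(U, U \ A)` is trivial for every open `U`, then the closed set `A` is
nowhere dense. -/
theorem homologicalZ0_interior_empty (X : Type) [TopologicalSpace X] (A : Set X)
    (hA : IsClosed A)
    (h : ∀ U : Set X, IsOpen U → Subsingleton (pairHomology X U (U \ A) 0)) :
    interior A = ∅ := by
  by_contra hne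
  obtain ⟨x, hx⟩ := Set.nonempty_iff_ne_empty.2 hne
  set U : Set X := interior A with hU
  set S : Set U := {z : U | (z : X) ∈ U \ A} with hS
  haveI hSempty : IsEmpty S := by
    refine ⟨fun z => z.2.2 (interior_subset z.1.2)⟩
  haveI hSempty' : IsEmpty (TopCat.of S) := hSempty
  set ι : singularChainFunctor.obj (TopCat.of S) ⟶ singularChainFunctor.obj (TopCat.of U) :=
    singularChainFunctor.map (TopCat.ofHom ⟨Subtype.val, continuous_subtype_val⟩ :
      TopCat.of S ⟶ TopCat.of U) with hι
  have hcomp : ι ≫ augChainMap (TopCat.of U) = 0 := by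
    apply HomologicalComplex.hom_ext
    intro n
    exact (isZero_singularChain (TopCat.of S) n).eq_of_src _ _
  set desc : cokernel ι ⟶ (ChainComplex.single₀ AddCommGrpCat).obj (AddCommGrpCat.of ℤ) :=
    cokernel.desc ι (augChainMap (TopCat.of U)) hcomp with hdesc
  haveI hEpiF : Epi ((augChainMap (TopCat.of U)).f 0) := by
    rw [augChainMap_f_zero]
    exact (AddCommGrpCat.epi_iff_surjective _).2 (augHom_surj _ (⟨x, hx⟩ : U))
  have h1 : Epi (HomologicalComplex.homologyMap (augChainMap (TopCat.of U)) 0) :=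
    HomologicalComplex.epi_homologyMap_of_epi_of_not_rel _ 0 (by simp [ComplexShape.down_Rel])
  have h2 : HomologicalComplex.homologyMap (cokernel.π ι) 0 ≫
      HomologicalComplex.homologyMap desc 0 =
      HomologicalComplex.homologyMap (augChainMap (TopCat.of U)) 0 := by
    rw [← HomologicalComplex.homologyMap_comp, hdesc, cokernel.π_desc]
  rw [← h2] at h1
  have h3 : Epi (HomologicalComplex.homologyMap desc 0) :=
    epi_of_epi (HomologicalComplex.homologyMap (cokernel.π ι) 0) _
  have hsurj : Function.Surjective (HomologicalComplex.homologyMap desc 0) :=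
    (AddCommGrpCat.epi_iff_surjective _).1 h3
  haveI hsub : Subsingleton ((cokernel ι).homology 0) := h U isOpen_interior
  haveI hsub2 : Subsingleton
      ((((ChainComplex.single₀ AddCommGrpCat).obj (AddCommGrpCat.of ℤ)).homology 0) : Type) := by
    constructor
    intro a b
    obtain ⟨a', rfl⟩ := hsurj a
    obtain ⟨b', rfl⟩ := hsurj b
    exact congrArg _ (Subsingleton.elim a' b')
  have iso := HomologicalComplex.singleObjHomologySelfIso (ComplexShape.down ℕ) 0
    (AddCommGrpCat.of ℤ)
  haveI : Subsingleton ℤ :=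
    (((forget AddCommGrpCat).mapIso iso).toEquiv.symm).subsingleton
  exact one_ne_zero (Subsingleton.elim (1 : ℤ) 0)
end

section
/- Let X be a topological space and let A be a closed homological Z_n-set in X. Then for every open pair V ⊆ U in X, every m ≤ n, and every z ∈ H_m(U, V), there exists a class z' ∈ H_m(U \ A, V \ A) whose image under the inclusion-induced homomorphism H_m(U \ A, V \ A) → H_m(U, V) equals z. (In particular, z has a singular carrier disjoint from A.) -/
open CategoryTheory CategoryTheory.Limits AlgebraicTopology

lemma zset_free_map_injective {α β : Type} (f : α ⟶ β) (hf : Function.Injective f) :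
    Function.Injective ⇑(AddCommGrpCat.free.map f) := by
  show Function.Injective ⇑(FreeAbelianGroup.map f)
  rcases isEmpty_or_nonempty α with h | h
  · haveI : Subsingleton (FreeAbelianGroup α) :=
      (FreeAbelianGroup.equivFinsupp α).toEquiv.subsingleton
    intro x y _; exact Subsingleton.elim x y
  · obtain ⟨g, hg⟩ := hf.hasLeftInverse
    intro x y hxy
    have h1 : FreeAbelianGroup.map (g ∘ f) x = FreeAbelianGroup.map (g ∘ f) y := by
      rw [FreeAbelianGroup.map_comp_apply, FreeAbelianGroup.map_comp_apply, hxy]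
    have h2 : g ∘ f = id := funext hg
    rwa [h2, FreeAbelianGroup.map_id_apply, FreeAbelianGroup.map_id_apply] at h1

lemma zset_chain_mono {Y Z : TopCat.{0}} (f : Y ⟶ Z) (hf : Function.Injective f) :
    Mono (singularChainFunctor.map f) := by
  apply HomologicalComplex.mono_of_mono_f
  intro i
  rw [AddCommGrpCat.mono_iff_injective]
  show Function.Injective ⇑(AddCommGrpCat.free.map ((TopCat.toSSet.map f).app _))
  apply zset_free_map_injective
  intro σ τ h
  have h' : σ.down ≫ f = τ.down ≫ f := congrArg ULift.down h
  show σ = τ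
  exact ULift.ext _ _ (TopCat.hom_ext (ContinuousMap.ext fun x => hf (ConcreteCategory.congr_hom h' x)))

/-- The short exact sequence of singular chain complexes of a pair. -/
noncomputable def zsetSES (Y : Type) [TopologicalSpace Y] (S : Set Y) :
    ShortComplex (ChainComplex AddCommGrpCat.{0} ℕ) :=
  ShortComplex.mk
    (singularChainFunctor.map
      (TopCat.ofHom ⟨Subtype.val, continuous_subtype_val⟩ : TopCat.of S ⟶ TopCat.of Y))
    (cokernel.π _) (cokernel.condition _)

lemma zsetSES_shortExact (Y : Type) [TopologicalSpace Y] (S : Set Y) :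
    (zsetSES Y S).ShortExact := by
  haveI : Mono (zsetSES Y S).f := zset_chain_mono _ Subtype.val_injective
  haveI : Epi (zsetSES Y S).g := coequalizer.π_epi
  exact ⟨ShortComplex.exact_of_g_is_cokernel _ (cokernelIsCokernel _)⟩

lemma zset_homology_epi (Y : Type) [TopologicalSpace Y] (S : Set Y) (k : ℕ)
    (hsub : Subsingleton (relSingularHomology Y S k)) :
    Epi (HomologicalComplex.homologyMap
      (singularChainFunctor.map
        (TopCat.ofHom ⟨Subtype.val, continuous_subtype_val⟩ : TopCat.of S ⟶ TopCat.of Y)) k) := by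
  have hE := (zsetSES_shortExact Y S).homology_exact₂ k
  rw [ShortComplex.ab_exact_iff] at hE
  rw [AddCommGrpCat.epi_iff_surjective]
  intro x
  exact hE x (@Subsingleton.elim _ hsub _ _)

lemma zset_homology_mono (Y : Type) [TopologicalSpace Y] (S : Set Y) (k : ℕ)
    (hsub : Subsingleton (relSingularHomology Y S (k + 1))) :
    Mono (HomologicalComplex.homologyMap
      (singularChainFunctor.map
        (TopCat.ofHom ⟨Subtype.val, continuous_subtype_val⟩ : TopCat.of S ⟶ TopCat.of Y)) k) := by
  have hE := (zsetSES_shortExact Y S).homology_exact₁ (k + 1) k rfl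
  rw [ShortComplex.ab_exact_iff] at hE
  rw [AddCommGrpCat.mono_iff_injective, injective_iff_map_eq_zero]
  intro a ha
  obtain ⟨y, hy⟩ := hE a ha
  rw [@Subsingleton.elim _ hsub y 0] at hy
  exact hy.symm.trans (map_zero _)

/-- Canonical homeomorphism between a subset `S ⊆ P` and the corresponding subset
of the subtype `↥P`. -/
def zsetHomeo {X : Type} [TopologicalSpace X] (P S : Set X) (h : S ⊆ P) :
    ↥S ≃ₜ {x : ↥P | (x : X) ∈ S} where
  toFun x := ⟨⟨x.1, h x.2⟩, x.2⟩
  invFun y := ⟨y.1.1, y.2⟩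
  left_inv _ := rfl
  right_inv _ := rfl
  continuous_toFun := ((continuous_subtype_val.subtype_mk _).subtype_mk _)
  continuous_invFun := ((continuous_subtype_val.comp continuous_subtype_val).subtype_mk _)


/-- The morphism of short exact sequences induced by an inclusion of pairs. -/
noncomputable def zsetPairMap (X : Type) [TopologicalSpace X] {U V U' V' : Set X}
    (hU : U' ⊆ U) (hV : V' ⊆ V) :
    zsetSES U' {x : U' | (x : X) ∈ V'} ⟶ zsetSES U {x : U | (x : X) ∈ V} where
  τ₁ := singularChainFunctor.map
        (TopCat.ofHom ⟨fun x => ⟨Set.inclusion hU x.1, hV x.2⟩,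
          (((continuous_inclusion hU).comp continuous_subtype_val).subtype_mk _)⟩ :
          TopCat.of {x : U' | (x : X) ∈ V'} ⟶ TopCat.of {x : U | (x : X) ∈ V})
  τ₂ := singularChainFunctor.map
        (TopCat.ofHom ⟨Set.inclusion hU, continuous_inclusion hU⟩ : TopCat.of U' ⟶ TopCat.of U)
  τ₃ := cokernel.map _ _
      (singularChainFunctor.map
        (TopCat.ofHom ⟨fun x => ⟨Set.inclusion hU x.1, hV x.2⟩,
          (((continuous_inclusion hU).comp continuous_subtype_val).subtype_mk _)⟩ :
          TopCat.of {x : U' | (x : X) ∈ V'} ⟶ TopCat.of {x : U | (x : X) ∈ V}))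
      (singularChainFunctor.map
        (TopCat.ofHom ⟨Set.inclusion hU, continuous_inclusion hU⟩ : TopCat.of U' ⟶ TopCat.of U))
      (by rw [← Functor.map_comp, ← Functor.map_comp]; congr 1)
  comm₁₂ := by
    show singularChainFunctor.map _ ≫ singularChainFunctor.map _ =
      singularChainFunctor.map _ ≫ singularChainFunctor.map _
    rw [← Functor.map_comp, ← Functor.map_comp]; congr 1
  comm₂₃ := by
    show singularChainFunctor.map _ ≫ cokernel.π _ = cokernel.π _ ≫ cokernel.map _ _ _ _ _
    simp [cokernel.map]

lemma zset_pairInclHom_eq (X : Type) [TopologicalSpace X] {U V U' V' : Set X}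
    (hU : U' ⊆ U) (hV : V' ⊆ V) (k : ℕ) :
    pairInclHom X hU hV k =
      HomologicalComplex.homologyMap (zsetPairMap X hU hV).τ₃ k := rfl

lemma zset_epi_comp {K L M N : ChainComplex AddCommGrpCat.{0} ℕ} (a : K ⟶ L) (b : L ⟶ M)
    (c : M ⟶ N) [IsIso a] [IsIso c] (k : ℕ)
    (h : Epi (HomologicalComplex.homologyMap b k)) :
    Epi (HomologicalComplex.homologyMap (a ≫ b ≫ c) k) := by
  rw [HomologicalComplex.homologyMap_comp, HomologicalComplex.homologyMap_comp]
  haveI : IsIso (HomologicalComplex.homologyMap a k) := by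
    change IsIso ((HomologicalComplex.homologyFunctor AddCommGrpCat (ComplexShape.down ℕ) k).map a)
    infer_instance
  haveI : IsIso (HomologicalComplex.homologyMap c k) := by
    change IsIso ((HomologicalComplex.homologyFunctor AddCommGrpCat (ComplexShape.down ℕ) k).map c)
    infer_instance
  haveI := h
  infer_instance

lemma zset_mono_comp {K L M N : ChainComplex AddCommGrpCat.{0} ℕ} (a : K ⟶ L) (b : L ⟶ M)
    (c : M ⟶ N) [IsIso a] [IsIso c] (k : ℕ)
    (h : Mono (HomologicalComplex.homologyMap b k)) :
    Mono (HomologicalComplex.homologyMap (a ≫ b ≫ c) k) := by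
  rw [HomologicalComplex.homologyMap_comp, HomologicalComplex.homologyMap_comp]
  haveI : IsIso (HomologicalComplex.homologyMap a k) := by
    change IsIso ((HomologicalComplex.homologyFunctor AddCommGrpCat (ComplexShape.down ℕ) k).map a)
    infer_instance
  haveI : IsIso (HomologicalComplex.homologyMap c k) := by
    change IsIso ((HomologicalComplex.homologyFunctor AddCommGrpCat (ComplexShape.down ℕ) k).map c)
    infer_instance
  haveI := h
  infer_instance


/-- If `A` is a homological `Z_n`-set, then every class in `H_m(U, V)` (`m ≤ n`, `V ⊆ U` open)
comes from `H_m(U \ A, V \ A)` under the inclusion-induced homomorphism. -/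
theorem exists_preimage_of_homologicalZSet (X : Type) [TopologicalSpace X] (n : ℕ∞)
    (A : Set X) (hA : IsHomologicalZSet X n A) (U V : Set X) (hU : IsOpen U) (hV : IsOpen V)
    (hVU : V ⊆ U) (m : ℕ) (hm : (m : ℕ∞) ≤ n) (z : pairHomology X U V m) :
    ∃ z' : pairHomology X (U \ A) (V \ A) m,
      pairInclHom X (Set.diff_subset : U \ A ⊆ U) (Set.diff_subset : V \ A ⊆ V) m z' = z := by
  obtain ⟨hAc, hZ⟩ := hA
  have hS₁ := zsetSES_shortExact (U \ A : Set X) {x : ↥(U \ A) | (x : X) ∈ V \ A}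
  have hS₂ := zsetSES_shortExact U {x : ↥U | (x : X) ∈ V}
  have hτ₂ : (zsetPairMap X (Set.diff_subset : U \ A ⊆ U)
        (Set.diff_subset : V \ A ⊆ V)).τ₂ =
      singularChainFunctor.map
        (TopCat.isoOfHomeo (zsetHomeo U (U \ A) Set.diff_subset)).hom ≫
      singularChainFunctor.map
        (TopCat.ofHom ⟨Subtype.val, continuous_subtype_val⟩ :
          TopCat.of {x : ↥U | (x : X) ∈ U \ A} ⟶ TopCat.of ↥U) ≫
      singularChainFunctor.map (Iso.refl (TopCat.of ↥U)).hom := by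
    show singularChainFunctor.map _ = _
    rw [← Functor.map_comp, ← Functor.map_comp]
    congr 1
  have hτ₁ : (zsetPairMap X (Set.diff_subset : U \ A ⊆ U)
        (Set.diff_subset : V \ A ⊆ V)).τ₁ =
      singularChainFunctor.map
        (TopCat.isoOfHomeo
          (((zsetHomeo (U \ A) (V \ A) (Set.diff_subset_diff_left hVU)).symm).trans
            (zsetHomeo V (V \ A) Set.diff_subset))).hom ≫
      singularChainFunctor.map
        (TopCat.ofHom ⟨Subtype.val, continuous_subtype_val⟩ :
          TopCat.of {x : ↥V | (x : X) ∈ V \ A} ⟶ TopCat.of ↥V) ≫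
      singularChainFunctor.map (TopCat.isoOfHomeo (zsetHomeo U V hVU)).hom := by
    show singularChainFunctor.map _ = _
    rw [← Functor.map_comp, ← Functor.map_comp]
    congr 1
  have main : Epi (HomologicalComplex.homologyMap
      (zsetPairMap X (Set.diff_subset : U \ A ⊆ U) (Set.diff_subset : V \ A ⊆ V)).τ₃ m) := by
    apply HomologicalComplex.HomologySequence.epi_homologyMap_τ₃ _ hS₁ hS₂ m
    · rw [hτ₂]
      exact @zset_epi_comp _ _ _ _ _ _ _ (Functor.map_isIso _ _) (Functor.map_isIso _ _) m (zset_homology_epi _ _ m (hZ U hU m hm))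
    · intro j hij
      have hij' : j + 1 = m := hij
      have hj : (j : ℕ∞) ≤ n := le_trans (by exact_mod_cast (by omega : j ≤ m)) hm
      rw [hτ₁]
      exact @zset_epi_comp _ _ _ _ _ _ _ (Functor.map_isIso _ _) (Functor.map_isIso _ _) j (zset_homology_epi _ _ j (hZ V hV j hj))
    · intro j hij
      have hij' : j + 1 = m := hij
      have hj : ((j + 1 : ℕ) : ℕ∞) ≤ n := by rw [hij']; exact hm
      rw [hτ₂]
      exact @zset_mono_comp _ _ _ _ _ _ _ (Functor.map_isIso _ _) (Functor.map_isIso _ _) j (zset_homology_mono _ _ j (hZ U hU (j + 1) hj))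
  rw [zset_pairInclHom_eq]
  obtain ⟨z', hz⟩ := (AddCommGrpCat.epi_iff_surjective _).1 main z
  exact ⟨z', hz⟩
end
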